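/- Let N : ℂ → Matrix (Fin n) (Fin n) ℂ and g : ℂ → ℂ be differentiable with g ≠ 0, satisfying g·Ṅ = η and ġ = (1/2)·trace(η·M) where M = -N⁻¹ and η is the identity matrix. Then g² · det(N) is constant (its derivative vanishes). -/

import Mathlib

/-- If `g·Ṅ = 1` (identity) and `ġ = ½ trace(M)` with `M = -N⁻¹`, then
`g² · det N` is constant: its derivative vanishes. -/
theorem quadric_ansatz_first_integral {n : ℕ}
    (N : ℂ → Matrix (Fin n) (Fin n) ℂ) (g : ℂ → ℂ)
    (hNdiff : ∀ i j, Differentiable ℂ fun u => N u i j)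
    (hNinv : ∀ u, IsUnit (N u).det)
    (hg : Differentiable ℂ g) (hg0 : ∀ u, g u ≠ 0)
    (hODE1 : ∀ u, g u • (Matrix.of fun i j => deriv (fun v => N v i j) u)
      = (1 : Matrix (Fin n) (Fin n) ℂ))
    (hODE2 : ∀ u, deriv g u = (1/2) * Matrix.trace (-(N u)⁻¹)) :
    ∀ u, deriv (fun v => (g v)^2 * (N v).det) u = 0 := by
  intro u
  set A := N u with hA
  set c : ℂ := (g u)⁻¹ with hc
  -- entrywise derivative of N
  have hNdE : ∀ i j : Fin n, HasDerivAt (fun v => N v i j)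
      (c * (if i = j then (1:ℂ) else 0)) u := by
    intro i j
    have h := congrFun (congrFun (hODE1 u) i) j
    simp only [Matrix.smul_apply, Matrix.of_apply, Matrix.one_apply, smul_eq_mul] at h
    have hval : deriv (fun v => N v i j) u = c * (if i = j then (1:ℂ) else 0) := by
      rw [hc]
      field_simp
      rw [eq_div_iff (hg0 u), mul_comm]
      exact h
    simpa [hval] using ((hNdiff i j) u).hasDerivAt
  -- Jacobi's formula in this special case
  have key : HasDerivAt (fun v => (N v).det) (c * (Matrix.adjugate A).trace) u := by
    have h1 : HasDerivAt
        (fun v => ∑ σ : Equiv.Perm (Fin n),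
          (Equiv.Perm.sign σ : ℂ) * ∏ i, N v (σ i) i)
        (∑ σ : Equiv.Perm (Fin n), (Equiv.Perm.sign σ : ℂ) *
          ∑ i, (∏ j ∈ Finset.univ.erase i, A (σ j) j) *
            (c * (if σ i = i then (1:ℂ) else 0))) u := by
      apply HasDerivAt.fun_sum
      intro σ _
      have hp := HasDerivAt.fun_finsetProd (u := Finset.univ)
        (f := fun i v => N v (σ i) i)
        (f' := fun i => c * (if σ i = i then (1:ℂ) else 0))
        (x := u) (fun i _ => hNdE (σ i) i)
      simpa [smul_eq_mul] using hp.const_mul ((Equiv.Perm.sign σ : ℂ))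
    have hfun : (fun v => (N v).det) = (fun v => ∑ σ : Equiv.Perm (Fin n),
        (Equiv.Perm.sign σ : ℂ) * ∏ i, N v (σ i) i) := by
      funext v
      rw [Matrix.det_apply]
      simp [Units.smul_def, zsmul_eq_mul]
    rw [hfun]
    convert h1 using 1
    -- show c * trace adjugate = the big sum
    rw [Matrix.trace]
    have hadj : ∀ i : Fin n, (Matrix.adjugate A).diag i
        = ∑ σ : Equiv.Perm (Fin n), (Equiv.Perm.sign σ : ℂ) *
            ((∏ j ∈ Finset.univ.erase i, A (σ j) j) *
              (if σ i = i then (1:ℂ) else 0)) := by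
      intro i
      rw [Matrix.diag, Matrix.adjugate_apply, Matrix.det_apply]
      congr 1
      funext σ
      rw [Units.smul_def, zsmul_eq_mul]
      congr 1
      by_cases hσ : σ i = i
      · rw [if_pos hσ, mul_one,
          ← Finset.mul_prod_erase Finset.univ _ (Finset.mem_univ i)]
        have hii : A.updateRow i (Pi.single i 1) (σ i) i = 1 := by
          rw [hσ, Matrix.updateRow_self, Pi.single_eq_same]
        rw [hii, one_mul]
        apply Finset.prod_congr rfl
        intro j hj
        have hji : j ≠ i := (Finset.mem_erase.mp hj).1
        have : σ j ≠ i := fun h => hji (by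
          have := σ.injective (h.trans hσ.symm); exact this)
        rw [Matrix.updateRow_apply, if_neg this]
      · rw [if_neg hσ, mul_zero]
        have hex : σ (σ.symm i) = i := σ.apply_symm_apply i
        have hne : σ.symm i ≠ i := by
          intro h
          apply hσ
          nth_rewrite 1 [← h]
          exact hex
        refine Finset.prod_eq_zero (Finset.mem_univ (σ.symm i)) ?_
        rw [Matrix.updateRow_apply, if_pos hex, Pi.single_eq_of_ne hne]
    rw [Finset.mul_sum]
    rw [show (∑ i, c * (Matrix.adjugate A).diag i)
        = ∑ i, ∑ σ : Equiv.Perm (Fin n), (Equiv.Perm.sign σ : ℂ) *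
            ((∏ j ∈ Finset.univ.erase i, A (σ j) j) *
              (c * (if σ i = i then (1:ℂ) else 0))) from by
      apply Finset.sum_congr rfl
      intro i _
      rw [hadj i, Finset.mul_sum]
      apply Finset.sum_congr rfl
      intro σ _
      ring]
    rw [Finset.sum_comm]
    apply Finset.sum_congr rfl
    intro σ _
    rw [Finset.mul_sum]
  -- combine with derivative of g²
  have hg2 : HasDerivAt (fun v => (g v)^2) (2 * g u * deriv g u) u := by
    simpa [pow_one, mul_comm, mul_assoc] using ((hg u).hasDerivAt.fun_pow 2)
  have htot := hg2.fun_mul key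
  rw [htot.deriv]
  have hdet0 : A.det ≠ 0 := (hNinv u).ne_zero
  -- rewrite trace of inverse via adjugate
  have hinv : Matrix.trace (-(A)⁻¹) = -(A.det⁻¹ * (Matrix.adjugate A).trace) := by
    rw [Matrix.trace_neg, Matrix.inv_def, Ring.inverse_eq_inv', Matrix.trace_smul,
      smul_eq_mul]
  rw [hODE2 u, ← hA, hinv]
  set T := (Matrix.adjugate A).trace
  field_simp [hc]
  linear_combination (g u * T) * (mul_inv_cancel₀ (hg0 u))
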